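/- The function b₀(x) := log x belongs to BMO(ℝ₊,dx), i.e. sup_I (1/|I|)∫_I |b₀ − (b₀)_I| dx < ∞ where the supremum is over bounded subintervals I of ℝ₊; but its odd extension (b₀)_o, defined by (b₀)_o(x) = log x for x>0 and (b₀)_o(x) = −log(−x) for x<0, does not belong to BMO(ℝ,dx), i.e. sup_J (1/|J|)∫_J |(b₀)_o − ((b₀)_o)_J| dx = ∞ where the supremum is over bounded intervals J ⊂ ℝ. In particular, the space BMO_o(ℝ₊,dx) := { f locally integrable on ℝ₊ : the odd extension f_o ∈ BMO(ℝ) } is a proper subset of BMO(ℝ₊,dx). -/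

import Mathlib

open MeasureTheory Real Set Filter

/-- The odd extension of `f : ℝ₊ → ℝ`: `f_o(x) = f(x)` for `x > 0`, `f_o(x) = -f(-x)` else. -/
noncomputable def oddExt (f : ℝ → ℝ) : ℝ → ℝ :=
  fun x => if 0 < x then f x else -f (-x)

/-- `f ∈ BMO(ℝ₊, dx)`: the mean oscillation of `f` over bounded subintervals of `ℝ₊`
is uniformly bounded. -/
def MemBMOpos (f : ℝ → ℝ) : Prop :=
  ∃ C : ℝ, ∀ u v : ℝ, 0 ≤ u → u < v →
    (v - u)⁻¹ * ∫ x in Set.Ioo u v,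
      |f x - (v - u)⁻¹ * ∫ t in Set.Ioo u v, f t| ≤ C

/-- `f ∈ BMO(ℝ, dx)`: the mean oscillation of `f` over bounded intervals of `ℝ`
is uniformly bounded. -/
def MemBMOreal (f : ℝ → ℝ) : Prop :=
  ∃ C : ℝ, ∀ u v : ℝ, u < v →
    (v - u)⁻¹ * ∫ x in Set.Ioo u v,
      |f x - (v - u)⁻¹ * ∫ t in Set.Ioo u v, f t| ≤ C

/-! ### Auxiliary lemmas -/

lemma log_integrableOn_Ioc {v : ℝ} (hv : 0 < v) :
    IntegrableOn Real.log (Set.Ioc 0 v) := by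
  have h1 : IntegrableOn Real.log (Set.Ioc (0:ℝ) 1) := by
    have key : IntegrableOn (fun x : ℝ => -Real.log x) (Set.Ioc (0:ℝ) 1) := by
      apply intervalIntegral.integrableOn_deriv_of_nonneg
        (g := fun x : ℝ => x - x * Real.log x)
      · exact (continuous_id.sub Real.continuous_mul_log).continuousOn
      · intro x hx
        have h := (hasDerivAt_id x).sub (Real.hasDerivAt_mul_log hx.1.ne')
        exact h.congr_deriv (by ring)
      · intro x hx
        simpa using Real.log_nonpos hx.1.le hx.2.le
    have key2 : IntegrableOn (fun x : ℝ => -(-Real.log x)) (Set.Ioc (0:ℝ) 1) := key.neg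
    simpa using key2
  rcases le_total v 1 with h | h
  · exact h1.mono_set (Set.Ioc_subset_Ioc_right h)
  · have h2 : IntegrableOn Real.log (Set.Ioc 1 v) :=
      (intervalIntegral.intervalIntegrable_log
        (Set.notMem_uIcc_of_lt one_pos (by linarith))).1
    have := h1.union h2
    rwa [Set.Ioc_union_Ioc_eq_Ioc zero_le_one h] at this

lemma log_intervalIntegrable {u v : ℝ} (hu : 0 ≤ u) (huv : u < v) :
    IntervalIntegrable Real.log volume u v := by
  constructor
  · exact (log_integrableOn_Ioc (hu.trans_lt huv)).mono_set (Set.Ioc_subset_Ioc_left hu)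
  · rw [Set.Ioc_eq_empty (not_lt.2 huv.le)]
    exact integrableOn_empty

lemma integral_log_Ioo {u v : ℝ} (hu : 0 ≤ u) (huv : u < v) :
    ∫ x in Set.Ioo u v, Real.log x
      = (v * Real.log v - v) - (u * Real.log u - u) := by
  have hint : IntervalIntegrable Real.log volume u v := log_intervalIntegrable hu huv
  have hF : ∀ x ∈ Set.Ioo u v,
      HasDerivAt (fun x : ℝ => x * Real.log x - x) (Real.log x) x := by
    intro x hx
    have h := (Real.hasDerivAt_mul_log (ne_of_gt (hu.trans_lt hx.1))).sub (hasDerivAt_id x)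
    exact h.congr_deriv (by ring)
  have hcont : Continuous (fun x : ℝ => x * Real.log x - x) :=
    Real.continuous_mul_log.sub continuous_id
  have h := intervalIntegral.integral_eq_sub_of_hasDerivAt_of_tendsto huv hF hint
    ((hcont.tendsto u).mono_left nhdsWithin_le_nhds)
    ((hcont.tendsto v).mono_left nhdsWithin_le_nhds)
  rw [intervalIntegral.integral_of_le huv.le, integral_Ioc_eq_integral_Ioo] at h
  exact h

lemma log_memBMOpos : MemBMOpos Real.log := by
  refine ⟨2, fun u v hu huv => ?_⟩
  have hv : 0 < v := hu.trans_lt huv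
  have hL0 : 0 < v - u := by linarith
  have hIlog : IntegrableOn Real.log (Set.Ioo u v) :=
    ((log_integrableOn_Ioc hv).mono_set (Set.Ioc_subset_Ioc_left hu)).mono_set
      Set.Ioo_subset_Ioc_self
  have hfin : volume (Set.Ioo u v) < ⊤ := by
    rw [Real.volume_Ioo]; exact ENNReal.ofReal_lt_top
  have hvol : (volume (Set.Ioo u v)).toReal = v - u := by
    rw [Real.volume_Ioo, ENNReal.toReal_ofReal hL0.le]
  have hconstc : ∀ c : ℝ, IntegrableOn (fun _ : ℝ => c) (Set.Ioo u v) := fun c =>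
    integrableOn_const hfin.ne
  have hDint : IntegrableOn (fun x => Real.log v - Real.log x) (Set.Ioo u v) :=
    (hconstc (Real.log v)).sub hIlog
  set m := (v - u)⁻¹ * ∫ t in Set.Ioo u v, Real.log t with hm
  have hle : ∀ x ∈ Set.Ioo u v, Real.log x ≤ Real.log v := fun x hx =>
    Real.log_le_log (hu.trans_lt hx.1) hx.2.le
  have hsplit : ∫ x in Set.Ioo u v, (Real.log v - Real.log x)
      = (v - u) * Real.log v - ∫ t in Set.Ioo u v, Real.log t := by
    rw [integral_sub (hconstc (Real.log v)) hIlog, setIntegral_const, measureReal_def, hvol, smul_eq_mul]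
  have hDval : ∫ x in Set.Ioo u v, (Real.log v - Real.log x)
      = (v - u) - u * (Real.log v - Real.log u) := by
    rw [hsplit, integral_log_Ioo hu huv]; ring
  have hDnonneg : 0 ≤ ∫ x in Set.Ioo u v, (Real.log v - Real.log x) :=
    setIntegral_nonneg measurableSet_Ioo fun x hx => sub_nonneg.2 (hle x hx)
  have huterm : 0 ≤ u * (Real.log v - Real.log u) := by
    rcases eq_or_lt_of_le hu with rfl | hu'
    · simp
    · exact mul_nonneg hu (sub_nonneg.2 (Real.log_le_log hu' huv.le))
  have hDle : ∫ x in Set.Ioo u v, (Real.log v - Real.log x) ≤ v - u := by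
    rw [hDval]; linarith
  have hmval : Real.log v - m
      = (v - u)⁻¹ * ∫ x in Set.Ioo u v, (Real.log v - Real.log x) := by
    rw [hsplit, hm, mul_sub]
    field_simp
  have hptwise : ∀ x ∈ Set.Ioo u v, |Real.log x - m|
      ≤ (Real.log v - Real.log x)
        + (v - u)⁻¹ * ∫ x in Set.Ioo u v, (Real.log v - Real.log x) := by
    intro x hx
    have h1 : |Real.log x - m| ≤ |Real.log x - Real.log v| + |Real.log v - m| :=
      abs_sub_le _ _ _
    have h2 : |Real.log x - Real.log v| = Real.log v - Real.log x := by
      rw [abs_sub_comm, abs_of_nonneg (sub_nonneg.2 (hle x hx))]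
    have h3 : |Real.log v - m|
        = (v - u)⁻¹ * ∫ x in Set.Ioo u v, (Real.log v - Real.log x) := by
      rw [hmval, abs_of_nonneg (mul_nonneg (inv_nonneg.2 hL0.le) hDnonneg)]
    rw [h2, h3] at h1
    exact h1
  have hIabs : IntegrableOn (fun x => |Real.log x - m|) (Set.Ioo u v) :=
    (hIlog.sub (hconstc m)).abs
  have hIrhs : IntegrableOn (fun x => (Real.log v - Real.log x)
      + (v - u)⁻¹ * ∫ x in Set.Ioo u v, (Real.log v - Real.log x)) (Set.Ioo u v) :=
    hDint.add (hconstc _)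
  have hmono : ∫ x in Set.Ioo u v, |Real.log x - m|
      ≤ ∫ x in Set.Ioo u v, ((Real.log v - Real.log x)
        + (v - u)⁻¹ * ∫ x in Set.Ioo u v, (Real.log v - Real.log x)) :=
    setIntegral_mono_on hIabs hIrhs measurableSet_Ioo hptwise
  have hrhs : ∫ x in Set.Ioo u v, ((Real.log v - Real.log x)
      + (v - u)⁻¹ * ∫ x in Set.Ioo u v, (Real.log v - Real.log x))
      = 2 * ∫ x in Set.Ioo u v, (Real.log v - Real.log x) := by
    rw [integral_add hDint (hconstc _), setIntegral_const, measureReal_def, hvol, smul_eq_mul]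
    field_simp
    ring
  have hfinal : ∫ x in Set.Ioo u v, |Real.log x - m| ≤ 2 * (v - u) := by
    rw [hrhs] at hmono
    linarith
  calc (v - u)⁻¹ * ∫ x in Set.Ioo u v, |Real.log x - m|
      ≤ (v - u)⁻¹ * (2 * (v - u)) :=
        mul_le_mul_of_nonneg_left hfinal (inv_nonneg.2 hL0.le)
    _ = 2 := by field_simp

lemma oddExt_log_neg (x : ℝ) : oddExt Real.log (-x) = - oddExt Real.log x := by
  rcases lt_trichotomy x 0 with h | rfl | h
  · simp [oddExt, not_lt.2 h.le, neg_pos.2 h, neg_neg]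
  · simp [oddExt]
  · simp [oddExt, h, not_lt.2 (neg_nonpos.2 h.le), neg_neg]

lemma oddExt_log_not_memBMOreal : ¬ MemBMOreal (oddExt Real.log) := by
  rintro ⟨C, hC⟩
  set ε := Real.exp (-(|C| + 1)) with hε
  have hε0 : 0 < ε := Real.exp_pos _
  have hε1 : ε < 1 := by
    rw [hε, Real.exp_lt_one_iff]
    have := abs_nonneg C
    linarith
  have hlogε : Real.log ε = -(|C| + 1) := Real.log_exp _
  have hIg : IntegrableOn (oddExt Real.log) (Set.Ioc 0 ε) := by
    apply (log_integrableOn_Ioc hε0).congr_fun ?_ measurableSet_Ioc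
    intro x hx
    simp [oddExt, hx.1]
  have hII : IntervalIntegrable (oddExt Real.log) volume 0 ε := by
    constructor
    · exact hIg
    · rw [Set.Ioc_eq_empty (not_lt.2 hε0.le)]
      exact integrableOn_empty
  have hIIneg : IntervalIntegrable (oddExt Real.log) volume (-ε) 0 := by
    have h1 : IntervalIntegrable (fun x => oddExt Real.log (-x)) volume (-0) (-ε) :=
      (IntervalIntegrable.iff_comp_neg (h := enorm_ne_top)).mp hII
    have h2 : IntervalIntegrable (fun x => -oddExt Real.log (-x)) volume (-0) (-ε) := h1.neg
    have h3 : (fun x => -oddExt Real.log (-x)) = oddExt Real.log :=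
      funext fun x => by rw [oddExt_log_neg, neg_neg]
    rw [h3] at h2
    simpa using h2.symm
  have hint0 : ∫ t in Set.Ioo (-ε) ε, oddExt Real.log t = 0 := by
    have hneg : ∫ x in (-ε)..(0:ℝ), oddExt Real.log x
        = - ∫ x in (0:ℝ)..ε, oddExt Real.log x := by
      have h1 : ∫ x in (-ε)..(0:ℝ), oddExt Real.log x
          = ∫ x in (-ε)..(0:ℝ), -oddExt Real.log (-x) := by
        congr 1
        funext x
        rw [oddExt_log_neg, neg_neg]
      rw [h1, intervalIntegral.integral_neg, intervalIntegral.integral_comp_neg]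
      simp
    rw [← integral_Ioc_eq_integral_Ioo,
      ← intervalIntegral.integral_of_le (by linarith : -ε ≤ ε),
      ← intervalIntegral.integral_add_adjacent_intervals hIIneg hII, hneg]
    ring
  have habs : Set.EqOn (fun x => |oddExt Real.log x|) (fun x => -Real.log x)
      (Set.Ioc 0 ε) := by
    intro x hx
    have hgx : oddExt Real.log x = Real.log x := if_pos hx.1
    simp only [hgx]
    exact abs_of_nonpos (Real.log_nonpos hx.1.le (hx.2.trans hε1.le))
  have h0ε : ∫ x in (0:ℝ)..ε, |oddExt Real.log x| = ε - ε * Real.log ε := by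
    rw [intervalIntegral.integral_of_le hε0.le,
      setIntegral_congr_fun measurableSet_Ioc habs, integral_Ioc_eq_integral_Ioo,
      integral_neg, integral_log_Ioo le_rfl hε0]
    ring
  have hnegabs : ∫ x in (-ε)..(0:ℝ), |oddExt Real.log x|
      = ∫ x in (0:ℝ)..ε, |oddExt Real.log x| := by
    have hfun : (fun x => |oddExt Real.log (-x)|) = fun x => |oddExt Real.log x| :=
      funext fun x => by rw [oddExt_log_neg, abs_neg]
    calc ∫ x in (-ε)..(0:ℝ), |oddExt Real.log x|
        = ∫ x in (-ε)..(0:ℝ), |oddExt Real.log (-x)| := by rw [hfun]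
      _ = ∫ x in (-(0:ℝ))..(-(-ε)), |oddExt Real.log x| :=
          intervalIntegral.integral_comp_neg (fun x => |oddExt Real.log x|)
      _ = ∫ x in (0:ℝ)..ε, |oddExt Real.log x| := by rw [neg_zero, neg_neg]
  have heq : ∫ x in Set.Ioo (-ε) ε, |oddExt Real.log x|
      = 2 * (ε - ε * Real.log ε) := by
    rw [← integral_Ioc_eq_integral_Ioo,
      ← intervalIntegral.integral_of_le (by linarith : -ε ≤ ε),
      ← intervalIntegral.integral_add_adjacent_intervals hIIneg.abs hII.abs,
      hnegabs, h0ε]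
    ring
  have hC' := hC (-ε) ε (by linarith)
  rw [hint0, mul_zero] at hC'
  simp only [sub_zero] at hC'
  rw [heq] at hC'
  have hval : (ε - -ε)⁻¹ * (2 * (ε - ε * Real.log ε)) = 1 - Real.log ε := by
    have h2ε : ε - -ε = 2 * ε := by ring
    rw [h2ε]
    field_simp
  rw [hval, hlogε] at hC'
  have := le_abs_self C
  linarith

/-- `b₀ = log` belongs to `BMO(ℝ₊,dx)`, its odd extension does not belong to `BMO(ℝ,dx)`,
and hence `BMO_o(ℝ₊,dx) = {f : f_o ∈ BMO(ℝ)}` is a proper subset of `BMO(ℝ₊,dx)`. -/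
theorem log_in_BMO_not_in_BMOo :
    MemBMOpos Real.log ∧ ¬ MemBMOreal (oddExt Real.log) ∧
    {f : ℝ → ℝ | MemBMOreal (oddExt f)} ⊂ {f : ℝ → ℝ | MemBMOpos f} := by
  have h1 := log_memBMOpos
  have h2 := oddExt_log_not_memBMOreal
  refine ⟨h1, h2, ?_⟩
  have hsub : {f : ℝ → ℝ | MemBMOreal (oddExt f)} ⊆ {f : ℝ → ℝ | MemBMOpos f} := by
    rintro f ⟨C, hC⟩
    refine ⟨C, fun u v hu huv => ?_⟩
    have heq : ∀ x ∈ Set.Ioo u v, oddExt f x = f x := fun x hx =>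
      if_pos (lt_of_le_of_lt hu hx.1)
    have e1 : ∫ t in Set.Ioo u v, oddExt f t = ∫ t in Set.Ioo u v, f t :=
      setIntegral_congr_fun measurableSet_Ioo heq
    have hC' := hC u v huv
    have e2 : ∫ x in Set.Ioo u v, |oddExt f x - (v - u)⁻¹ * ∫ t in Set.Ioo u v, oddExt f t|
        = ∫ x in Set.Ioo u v, |f x - (v - u)⁻¹ * ∫ t in Set.Ioo u v, f t| := by
      rw [e1]
      exact setIntegral_congr_fun measurableSet_Ioo fun x hx => by rw [heq x hx]
    rw [e2] at hC'
    exact hC'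
  exact (Set.ssubset_iff_of_subset hsub).2 ⟨Real.log, h1, h2⟩
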